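/- Let M be a loopless matroid on E = {0,...,N}, let V be the free abelian group on e₀,...,e_N, and for a subset S ⊆ E write e_S = Σ_{j∈S} e_j. If J ⊆ J'' are flats with rk(J'') ≥ rk(J)+2 and J'₁,...,J'_s are the flats of rank rk(J)+1 strictly between J and J'', then e_J ∧ e_{J''} = Σ_{i=1}^{s} e_J ∧ e_{J'_i} in ⋀² V. -/

import Mathlib

/- Shared definitions: exterior algebra pairing, basis vectors, boundary operator,
   and elementary matroid notions (rank, looplessness) not present in this Mathlib. -/

open ExteriorAlgebra

set_option maxHeartbeats 1000000
set_option synthInstance.maxHeartbeats 400000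

open Classical in
/-- `e_S`: sum of the standard basis vectors of `ℤ^n` indexed by `S`. -/
noncomputable def eS {n : ℕ} (S : Set (Fin n)) : Fin n → ℤ := fun j => if j ∈ S then 1 else 0

/-- the `i`-th standard basis vector of `ℤ^n`. -/
noncomputable def fb {n : ℕ} (i : Fin n) : Fin n → ℤ := Pi.single i 1

/-- The pairing of a pure `k`-fold wedge `v₁ ∧ ... ∧ v_k` of vectors of `V` with the
exterior algebra of the dual module, determined by
`⟨w₁ ∧ ... ∧ w_k, v₁ ∧ ... ∧ v_k⟩ = det (wᵢ (vⱼ))` on the degree-`k` part and `0` on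
other degrees. -/
noncomputable def pairPure {V : Type*} [AddCommGroup V] [Module ℤ V] (k : ℕ)
    (v : Fin k → V) : ExteriorAlgebra ℤ (Module.Dual ℤ V) →ₗ[ℤ] ℤ :=
  ExteriorAlgebra.liftAlternating fun m =>
    if h : m = k then
      h ▸ (Matrix.detRowAlternating.compLinearMap
        (LinearMap.pi fun j : Fin k => LinearMap.applyₗ (v j)))
    else 0

/-- A matroid is loopless if every singleton of the ground set is independent. -/
def Matroid.Loopless' {α : Type*} (M : Matroid α) : Prop := ∀ x ∈ M.E, M.Indep {x}

/-- The rank of a set in a matroid: the largest cardinality of an independent subset. -/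
noncomputable def Matroid.rk' {α : Type*} (M : Matroid α) (X : Set α) : ℕ :=
  sSup {m : ℕ | ∃ I, I ⊆ X ∧ M.Indep I ∧ I.ncard = m}
open Set

variable {α : Type*} {M : Matroid α} {X F F₁ F₂ I B : Set α} {x : α}

lemma closure_flat' (M : Matroid α) (X : Set α) : M.IsFlat (M.closure X) := by
  rw [Matroid.closure_def]
  have hne : {F | M.IsFlat F ∧ X ∩ M.E ⊆ F}.Nonempty := ⟨M.E, M.ground_isFlat, inter_subset_right⟩
  haveI := hne.to_subtype
  rw [sInter_eq_iInter]
  exact Matroid.IsFlat.iInter fun F => F.2.1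

lemma rk'_eq_ncard [Finite α] (hB : M.IsBasis B X) : M.rk' X = B.ncard := by
  have hub : ∀ m ∈ {m : ℕ | ∃ I, I ⊆ X ∧ M.Indep I ∧ I.ncard = m}, m ≤ B.ncard := by
    rintro m ⟨I, hIX, hI, rfl⟩
    obtain ⟨J, hJ, hIJ⟩ := hI.subset_isBasis_of_subset hIX hB.subset_ground
    have h1 : I.ncard ≤ J.ncard := Set.ncard_le_ncard hIJ J.toFinite
    have h2 : J.ncard = B.ncard := by
      have := hJ.encard_eq_encard hB
      rw [Set.ncard_def, this, ← Set.ncard_def]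
    omega
  refine le_antisymm (csSup_le ⟨B.ncard, B, hB.subset, hB.indep, rfl⟩ hub) ?_
  exact le_csSup ⟨B.ncard, hub⟩ ⟨B, hB.subset, hB.indep, rfl⟩

lemma flat_eq_of_rk' [Finite α] (hF₁ : M.IsFlat F₁) (hF₂ : M.IsFlat F₂) (h12 : F₁ ⊆ F₂)
    (hr : M.rk' F₁ = M.rk' F₂) : F₁ = F₂ := by
  obtain ⟨B, hB⟩ := M.exists_isBasis F₁ hF₁.subset_ground
  by_contra hne
  obtain ⟨x, hx2, hx1⟩ := exists_of_ssubset (h12.ssubset_of_ne hne)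
  have hxB : x ∉ B := fun h => hx1 (hB.subset h)
  have hxcl : x ∉ M.closure B := by
    rwa [hB.closure_eq_closure, hF₁.closure]
  have hind : M.Indep (insert x B) := by
    rw [hB.indep.insert_indep_iff_of_notMem hxB]
    exact ⟨hF₂.subset_ground hx2, hxcl⟩
  have hle : (insert x B).ncard ≤ M.rk' F₂ := by
    have hub := le_csSup (s := {m : ℕ | ∃ I, I ⊆ F₂ ∧ M.Indep I ∧ I.ncard = m})
      ?_ ⟨insert x B, insert_subset hx2 (hB.subset.trans h12), hind, rfl⟩
    · exact hub
    · obtain ⟨B₂, hB₂⟩ := M.exists_isBasis F₂ hF₂.subset_ground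
      refine ⟨B₂.ncard, ?_⟩
      rintro m ⟨I, hIX, hI, rfl⟩
      obtain ⟨Jb, hJb, hIJ⟩ := hI.subset_isBasis_of_subset hIX hB₂.subset_ground
      have h1 : I.ncard ≤ Jb.ncard := Set.ncard_le_ncard hIJ Jb.toFinite
      have h2 : Jb.ncard = B₂.ncard := by
        have := hJb.encard_eq_encard hB₂
        rw [Set.ncard_def, this, ← Set.ncard_def]
      omega
  rw [Set.ncard_insert_of_notMem hxB B.toFinite, ← hr, rk'_eq_ncard hB] at hle
  omega

lemma rk'_closure_insert [Finite α] (hF : M.IsFlat F) (hxE : x ∈ M.E) (hx : x ∉ F) :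
    M.rk' (M.closure (insert x F)) = M.rk' F + 1 := by
  obtain ⟨B, hB⟩ := M.exists_isBasis F hF.subset_ground
  have hxB : x ∉ B := fun h => hx (hB.subset h)
  have hxcl : x ∉ M.closure B := by rwa [hB.closure_eq_closure, hF.closure]
  have hind : M.Indep (insert x B) := by
    rw [hB.indep.insert_indep_iff_of_notMem hxB]
    exact ⟨hxE, hxcl⟩
  have hcl : M.closure (insert x B) = M.closure (insert x F) := by
    conv_rhs => rw [← hF.closure, ← hB.closure_eq_closure,
      Matroid.closure_insert_closure_eq_closure_insert]
  have hbasis : M.IsBasis (insert x B) (M.closure (insert x F)) := hcl ▸ hind.isBasis_closure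
  rw [rk'_eq_ncard hbasis, rk'_eq_ncard hB, Set.ncard_insert_of_notMem hxB B.toFinite]

/-- With `e_S = Σ_{j ∈ S} e_j ∈ ℤ^{N+1}`: if `J ⊆ J''` are flats of a
loopless matroid `M` on `{0, ..., N}` with `rk(J'') ≥ rk(J) + 2`, then in `⋀² ℤ^{N+1}`
one has `e_J ∧ e_{J''} = Σᵢ e_J ∧ e_{J'ᵢ}`, the sum over the flats `J'ᵢ` of rank
`rk(J) + 1` strictly between `J` and `J''`. -/
theorem stmt_3 {N : ℕ} (M : Matroid (Fin (N + 1))) (hM : M.Loopless')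
    (hE : M.E = Set.univ) (J J'' : Set (Fin (N + 1)))
    (hJ : M.IsFlat J) (hJ'' : M.IsFlat J'') (hsub : J ⊆ J'')
    (hrk : M.rk' J + 2 ≤ M.rk' J'') :
    ExteriorAlgebra.ι ℤ (eS J) * ExteriorAlgebra.ι ℤ (eS J'') =
      ∑ᶠ J' ∈ {J' | M.IsFlat J' ∧ J ⊂ J' ∧ J' ⊂ J'' ∧ M.rk' J' = M.rk' J + 1},
        ExteriorAlgebra.ι ℤ (eS J) * ExteriorAlgebra.ι ℤ (eS J') := by
  classical
  set 𝒮 : Set (Set (Fin (N + 1))) :=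
    {J' | M.IsFlat J' ∧ J ⊂ J' ∧ J' ⊂ J'' ∧ M.rk' J' = M.rk' J + 1} with h𝒮
  have hfin : 𝒮.Finite := Set.toFinite _
  set T := hfin.toFinset with hT
  have hmemT : ∀ F, F ∈ T ↔ F ∈ 𝒮 := fun F => hfin.mem_toFinset
  -- existence and uniqueness of the flat containing a given j ∈ J'' \ J
  have exun : ∀ j, j ∈ J'' → j ∉ J → ∃! F, F ∈ 𝒮 ∧ j ∈ F := by
    intro j hj2 hj1
    have hjE : j ∈ M.E := by rw [hE]; trivial
    set F₀ := M.closure (insert j J) with hF₀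
    have hflat : M.IsFlat F₀ := closure_flat' M _
    have hJF₀ : J ⊆ F₀ :=
      (Set.subset_insert _ _).trans (M.subset_closure _ (by rw [hE]; exact Set.subset_univ _))
    have hjF₀ : j ∈ F₀ :=
      M.subset_closure _ (by rw [hE]; exact Set.subset_univ _) (Set.mem_insert _ _)
    have hF₀J'' : F₀ ⊆ J'' := by
      have := M.closure_subset_closure (Set.insert_subset hj2 hsub) (Y := J'')
      rwa [hJ''.closure] at this
    have hrkF₀ : M.rk' F₀ = M.rk' J + 1 := rk'_closure_insert hJ hjE hj1
    have hssub1 : J ⊂ F₀ := hJF₀.ssubset_of_ne (fun h => hj1 (h ▸ hjF₀))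
    have hssub2 : F₀ ⊂ J'' := hF₀J''.ssubset_of_ne (by
      intro h; rw [h] at hrkF₀; omega)
    refine ⟨F₀, ⟨⟨hflat, hssub1, hssub2, hrkF₀⟩, hjF₀⟩, ?_⟩
    rintro F ⟨⟨hFflat, hJF, hFJ'', hrkF⟩, hjF⟩
    have hsubF : F₀ ⊆ F := by
      have := M.closure_subset_closure (Set.insert_subset hjF hJF.subset) (Y := F)
      rwa [hFflat.closure] at this
    exact (flat_eq_of_rk' hflat hFflat hsubF (by rw [hrkF₀, hrkF])).symm
  -- the key vector identity
  have key : ∑ J' ∈ T, (eS J' - eS J) = eS J'' - eS J := by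
    funext j
    rw [Finset.sum_apply]
    by_cases hj1 : j ∈ J
    · have hj2 : j ∈ J'' := hsub hj1
      rw [Finset.sum_eq_zero]
      · simp [eS, hj1, hj2]
      · intro F hF
        have hjF : j ∈ F := ((hmemT F).mp hF).2.1.subset hj1
        simp [eS, hj1, hjF]
    · by_cases hj2 : j ∈ J''
      · obtain ⟨F₀, ⟨hF₀𝒮, hjF₀⟩, huniq⟩ := exun j hj2 hj1
        rw [Finset.sum_eq_single_of_mem F₀ ((hmemT F₀).mpr hF₀𝒮)]
        · simp [eS, hj1, hj2, hjF₀]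
        · intro F hF hne
          have hjF : j ∉ F := fun hjF => hne (huniq F ⟨(hmemT F).mp hF, hjF⟩)
          simp [eS, hj1, hjF]
      · rw [Finset.sum_eq_zero]
        · simp [eS, hj1, hj2]
        · intro F hF
          have hjF : j ∉ F := fun h => hj2 (((hmemT F).mp hF).2.2.1.subset h)
          simp [eS, hj1, hjF]
  rw [finsum_mem_eq_finite_toFinset_sum _ hfin]
  calc ExteriorAlgebra.ι ℤ (eS J) * ExteriorAlgebra.ι ℤ (eS J'')
      = ExteriorAlgebra.ι ℤ (eS J) * ExteriorAlgebra.ι ℤ (eS J'' - eS J) := by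
        rw [map_sub, mul_sub, ExteriorAlgebra.ι_sq_zero, sub_zero]
    _ = ExteriorAlgebra.ι ℤ (eS J) * ExteriorAlgebra.ι ℤ (∑ J' ∈ T, (eS J' - eS J)) := by
        rw [key]
    _ = ∑ J' ∈ T, ExteriorAlgebra.ι ℤ (eS J) * ExteriorAlgebra.ι ℤ (eS J' - eS J) := by
        rw [map_sum, Finset.mul_sum]
    _ = ∑ J' ∈ T, ExteriorAlgebra.ι ℤ (eS J) * ExteriorAlgebra.ι ℤ (eS J') :=
        Finset.sum_congr rfl fun J' _ => by
          rw [map_sub, mul_sub, ExteriorAlgebra.ι_sq_zero, sub_zero]
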